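/- For an irreducible rate matrix W with stationary distribution π, the sum over all off-diagonal log-rate derivatives of each stationary probability vanishes: Σ_{m≠n} ∂π_j/∂ω_{mn} = 0 for every state j, where w_{mn} = e^{ω_{mn}}. -/

import Mathlib

/-- Transition rate matrix with rates `w_{mn} = exp(ω_{mn})` (m ≠ n) and diagonal
entries making column sums vanish. -/
noncomputable def rateMatrix {d : ℕ} (ω : Fin d → Fin d → ℝ) (m n : Fin d) : ℝ :=
  if m = n then -(∑ k ∈ Finset.univ.erase n, Real.exp (ω k n)) else Real.exp (ω m n)

/-- The coordinate direction `e_{mn}` in the parameter space of log-rates. -/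
def logRateDir {d : ℕ} (m n : Fin d) : Fin d → Fin d → ℝ :=
  fun a b => if a = m ∧ b = n then 1 else 0

/-- all-ones off-diagonal direction -/
def offDiagDir (d : ℕ) : Fin d → Fin d → ℝ := fun a b => if a = b then 0 else 1

lemma rateMatrix_shift {d : ℕ} (ω : Fin d → Fin d → ℝ) (t : ℝ) (m n : Fin d) :
    rateMatrix (ω + t • offDiagDir d) m n = Real.exp t * rateMatrix ω m n := by
  unfold rateMatrix offDiagDir
  by_cases h : m = n
  · subst h
    rw [if_pos rfl, if_pos rfl, mul_neg, Finset.mul_sum]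
    congr 1
    apply Finset.sum_congr rfl
    intro k hk
    have hk' : k ≠ m := Finset.ne_of_mem_erase hk
    simp [hk', Real.exp_add, mul_comm]
  · simp [h, Real.exp_add, mul_comm]

lemma pi_shift_invariant {d : ℕ}
    (π : (Fin d → Fin d → ℝ) → (Fin d → ℝ))
    (hπnorm : ∀ ω, ∑ j, π ω j = 1)
    (hstat : ∀ ω m, ∑ n, rateMatrix ω m n * π ω n = 0)
    -- irreducibility: the stationary distribution is the unique kernel direction
    (hker : ∀ (ω : Fin d → Fin d → ℝ) (v : Fin d → ℝ),
      (∀ m, ∑ n, rateMatrix ω m n * v n = 0) → ∃ c : ℝ, v = fun j => c * π ω j)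
    (ω : Fin d → Fin d → ℝ) (t : ℝ) :
    π (ω + t • offDiagDir d) = π ω := by
  set ω' := ω + t • offDiagDir d with hω'
  have h1 : ∀ m, ∑ n, rateMatrix ω m n * π ω' n = 0 := by
    intro m
    have := hstat ω' m
    have h2 : ∑ n, rateMatrix ω' m n * π ω' n
        = Real.exp t * ∑ n, rateMatrix ω m n * π ω' n := by
      rw [Finset.mul_sum]
      apply Finset.sum_congr rfl
      intro n _
      rw [rateMatrix_shift, mul_assoc]
    rw [h2] at this
    exact (mul_eq_zero.mp this).resolve_left (Real.exp_ne_zero t)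
  obtain ⟨c, hc⟩ := hker ω (π ω') h1
  have hsum : ∑ j, π ω' j = c * ∑ j, π ω j := by
    rw [hc, Finset.mul_sum]
  rw [hπnorm, hπnorm, mul_one] at hsum
  rw [hc, ← hsum]
  simp

/-- For an irreducible rate matrix `W` with rates `w_{mn} = e^{ω_{mn}}` and stationary
distribution `π(ω)`, the sum over all off-diagonal log-rate derivatives of each
stationary probability vanishes: `Σ_{m≠n} ∂π_j/∂ω_{mn} = 0` for every state `j`. -/
theorem sum_logRate_derivatives_of_stationary_vanish {d : ℕ} (hd : 0 < d)
    (π : (Fin d → Fin d → ℝ) → (Fin d → ℝ))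
    (hπdiff : Differentiable ℝ π)
    (hπpos : ∀ ω j, 0 < π ω j)
    (hπnorm : ∀ ω, ∑ j, π ω j = 1)
    (hstat : ∀ ω m, ∑ n, rateMatrix ω m n * π ω n = 0)
    -- irreducibility: the stationary distribution is the unique kernel direction
    (hker : ∀ (ω : Fin d → Fin d → ℝ) (v : Fin d → ℝ),
      (∀ m, ∑ n, rateMatrix ω m n * v n = 0) → ∃ c : ℝ, v = fun j => c * π ω j)
    (ω₀ : Fin d → Fin d → ℝ) :
    ∀ j : Fin d,
      ∑ m, ∑ n, (if m = n then 0
        else fderiv ℝ (fun ω => π ω j) ω₀ (logRateDir m n)) = 0 := by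
  intro j
  set f : (Fin d → Fin d → ℝ) → ℝ := fun ω => π ω j with hf
  have hfd : Differentiable ℝ f :=
    (differentiable_apply (𝕜 := ℝ) (F' := fun _ : Fin d => ℝ) j).comp hπdiff
  -- derivative of f along offDiagDir is 0
  have hconst : ∀ t : ℝ, f (ω₀ + t • offDiagDir d) = f ω₀ := by
    intro t
    rw [hf]
    simp only []
    rw [pi_shift_invariant π hπnorm hstat hker ω₀ t]
  have hline : HasDerivAt (fun t : ℝ => ω₀ + t • offDiagDir d) (offDiagDir d) 0 := by
    have h1 : HasDerivAt (fun t : ℝ => t • offDiagDir d) (offDiagDir d) 0 := by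
      simpa using (hasDerivAt_id (0:ℝ)).smul_const (offDiagDir d)
    simpa using h1.const_add ω₀
  have hcomp : HasDerivAt (fun t : ℝ => f (ω₀ + t • offDiagDir d))
      (fderiv ℝ f ω₀ (offDiagDir d)) 0 := by
    have h0 : HasFDerivAt f (fderiv ℝ f ω₀) ((fun t : ℝ => ω₀ + t • offDiagDir d) 0) := by
      simpa using (hfd ω₀).hasFDerivAt
    exact h0.comp_hasDerivAt 0 hline
  have hzero : fderiv ℝ f ω₀ (offDiagDir d) = 0 := by
    have hconstfun : (fun t : ℝ => f (ω₀ + t • offDiagDir d)) = fun _ => f ω₀ :=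
      funext hconst
    rw [hconstfun] at hcomp
    have := hcomp.deriv
    simpa using this.symm
  -- rewrite the sum as fderiv applied to offDiagDir
  calc ∑ m, ∑ n, (if m = n then 0 else fderiv ℝ f ω₀ (logRateDir m n))
      = ∑ m, ∑ n, fderiv ℝ f ω₀ (if m = n then 0 else logRateDir m n) := by
        apply Finset.sum_congr rfl; intro m _
        apply Finset.sum_congr rfl; intro n _
        by_cases h : m = n <;> simp [h]
    _ = fderiv ℝ f ω₀ (∑ m, ∑ n, (if m = n then 0 else logRateDir m n)) := by
        rw [map_sum]; apply Finset.sum_congr rfl; intro m _; rw [map_sum]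
    _ = fderiv ℝ f ω₀ (offDiagDir d) := by
        congr 1
        funext a b
        simp only [Finset.sum_apply]
        have hterm : ∀ m n : Fin d,
            (if m = n then (0 : Fin d → Fin d → ℝ) else logRateDir m n) a b
            = if n = b then (if m = a then (if a = b then 0 else 1) else 0) else 0 := by
          intro m n
          rw [apply_ite (fun g : Fin d → Fin d → ℝ => g a b)]
          simp only [Pi.zero_apply, logRateDir]
          by_cases h1 : n = b
          · by_cases h2 : m = a
            · subst h1; subst h2
              by_cases h3 : m = n <;> simp [h3]
            · subst h1
              simp [h2, Ne.symm h2]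
          · simp [h1, Ne.symm h1]
        simp only [hterm, Finset.sum_ite_eq', Finset.mem_univ, if_true]
        simp [offDiagDir]
    _ = 0 := hzero
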